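/- For every $m \geq 2$, the Gromov–Hausdorff distance between the vertex sets $P_m$ and $P_{m+1}$ of regular $m$- and $(m+1)$-gons inscribed in the unit circle (with the restricted geodesic metric) equals $\frac{\pi}{m+1}$. -/

import Mathlib

open Real

/-- Vertex set of the regular `n`-gon inscribed in the unit circle, modeled inside
`AddCircle (2π)` whose quotient metric is exactly the geodesic metric
`d(α,β) = min (|α-β|) (2π - |α-β|)`. -/
noncomputable def Pvert (n : ℕ) : Set (AddCircle (2 * π)) :=
  Set.range fun j : Fin n => ((2 * π * j / n : ℝ) : AddCircle (2 * π))

instance (n : ℕ) : Finite (Pvert n) := by unfold Pvert; exact (Set.finite_range _).to_subtype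


instance (n : ℕ) [NeZero n] : Nonempty (Pvert n) := by
  unfold Pvert; exact ⟨⟨_, Set.mem_range_self (0 : Fin n)⟩⟩

open Metric Set

noncomputable def vtx (n j : ℕ) : AddCircle (2 * π) := ((2 * π * j / n : ℝ) : AddCircle (2 * π))

lemma dist_vtx (n j k : ℕ) (hn : 0 < n) :
    dist (vtx n j) (vtx n k)
      = (2 * π / n) * ((min ((((j:ℤ) - k) % n)) ((n:ℤ) - (((j:ℤ) - k) % n)) : ℤ) : ℝ) := by
  have hπ : (0:ℝ) < 2 * π := by positivity
  have hn' : (0:ℝ) < n := by exact_mod_cast hn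
  rw [dist_eq_norm]
  have h1 : vtx n j - vtx n k = ((2 * π * (((j:ℤ) - k : ℤ) : ℝ) / n : ℝ) : AddCircle (2 * π)) := by
    rw [vtx, vtx, ← QuotientAddGroup.mk_sub]
    congr 1
    push_cast
    ring
  rw [h1, AddCircle.norm_eq' _ hπ]
  have h2 : (2 * π)⁻¹ * (2 * π * (((j:ℤ) - k : ℤ) : ℝ) / n) = (((j:ℤ) - k : ℤ) : ℝ) / n := by
    field_simp
  rw [h2, abs_sub_round_eq_min, Int.fract_div_intCast_eq_div_intCast_mod]
  have h3 : (1 : ℝ) - ((((j:ℤ) - k) % n : ℤ) : ℝ) / n = (((n:ℤ) - ((j:ℤ) - k) % n : ℤ) : ℝ) / n := by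
    push_cast
    field_simp
  rw [h3, div_eq_mul_inv, div_eq_mul_inv, ← min_mul_of_nonneg _ _ (by positivity : (0:ℝ) ≤ (n:ℝ)⁻¹)]
  push_cast
  ring

lemma key1 (m t : ℤ) (hm : 2 ≤ m) (ht0 : 0 ≤ t) (htm : t ≤ m) :
    |(m+1) * min t (m - t) - m * min t (m+1-t)| ≤ m := by
  rcases le_or_gt (2*t) m with h | h
  · rw [min_eq_left (by omega), min_eq_left (by omega)]
    have e : (m+1) * t - m * t = t := by ring
    rw [e, abs_of_nonneg ht0]; omega
  · rcases le_or_gt (2*t) (m+1) with h2 | h2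
    · have ht : 2*t = m+1 := by omega
      rw [min_eq_right (by omega), min_eq_left (by omega)]
      have e : (m+1) * (m - t) - m * t = -t := by linear_combination (-m) * ht
      rw [e, abs_neg, abs_of_nonneg ht0]; omega
    · rw [min_eq_right (by omega), min_eq_right (by omega)]
      have e : (m+1) * (m - t) - m * (m+1-t) = -t := by ring
      rw [e, abs_neg, abs_of_nonneg ht0]; omega

lemma key2 (m t : ℤ) (hm : 2 ≤ m) (ht0 : 1 ≤ t) (htm : t ≤ m) :
    |(m+1) * min (t-1) (m - (t-1)) - m * min t (m+1-t)| ≤ m := by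
  rcases le_or_gt (2*t) (m+1) with h | h
  · rw [min_eq_left (by omega), min_eq_left (by omega)]
    have e : (m+1) * (t-1) - m * t = t - (m+1) := by ring
    rw [e, abs_of_nonpos (by omega)]; omega
  · rw [min_eq_right (by omega), min_eq_right (by omega)]
    have e : (m+1) * (m - (t-1)) - m * (m+1-t) = m+1-t := by ring
    rw [e, abs_of_nonneg (by omega)]; omega

lemma conv (m : ℕ) (hm : 2 ≤ m) (a b : ℤ)
    (h : |((m:ℤ)+1) * a - (m:ℤ) * b| ≤ (m:ℤ)) :
    |2 * π / m * (a:ℝ) - 2 * π / (m+1) * (b:ℝ)| ≤ 2 * (π / (m+1)) := by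
  have hπ := pi_pos
  have hm0 : (0:ℝ) < m := by exact_mod_cast (by omega : 0 < m)
  have hm1 : (0:ℝ) < (m:ℝ)+1 := by linarith
  have e : 2 * π / m * (a:ℝ) - 2 * π / (m+1) * (b:ℝ)
      = (2 * π / ((m:ℝ) * ((m:ℝ)+1))) * (((m:ℝ)+1) * a - (m:ℝ) * b) := by
    field_simp
  rw [e, abs_mul, abs_of_pos (by positivity)]
  have h' : |((m:ℝ)+1) * (a:ℝ) - (m:ℝ) * (b:ℝ)| ≤ (m:ℝ) := by exact_mod_cast h
  calc 2 * π / ((m:ℝ) * ((m:ℝ)+1)) * |((m:ℝ)+1) * (a:ℝ) - (m:ℝ) * (b:ℝ)|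
      ≤ 2 * π / ((m:ℝ) * ((m:ℝ)+1)) * m := by
        exact mul_le_mul_of_nonneg_left h' (by positivity)
    _ = 2 * (π / (m+1)) := by field_simp

lemma main_ineq (m : ℕ) (hm : 2 ≤ m) (k k' : ℕ) (hk : k ≤ m) (hk' : k' ≤ m) :
    |dist (vtx m (k-1)) (vtx m (k'-1)) - dist (vtx (m+1) k) (vtx (m+1) k')|
      ≤ 2 * (π / ((m:ℝ)+1)) := by
  have hπ := pi_pos
  wlog hw : k' ≤ k generalizing k k' with W
  · have h := W k' k hk' hk (by omega)
    rw [dist_comm (vtx m (k'-1)), dist_comm (vtx (m+1) k')] at h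
    exact h
  by_cases hkk : k = k'
  · subst hkk; simp; positivity
  have cR : ((m+1:ℕ):ℝ) = (m:ℝ)+1 := by push_cast; ring
  have cZ : ((m+1:ℕ):ℤ) = (m:ℤ)+1 := by push_cast; ring
  rw [dist_vtx m _ _ (by omega), dist_vtx (m+1) _ _ (by omega), cR, cZ]
  have hmZ : 2 ≤ (m:ℤ) := by omega
  rcases Nat.eq_zero_or_pos k' with h0 | h1
  · subst h0
    have e : ((k-1:ℕ):ℤ) - ((0-1:ℕ):ℤ) = (k:ℤ) - 1 := by omega
    rw [e, Int.emod_eq_of_lt (by omega) (by omega)]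
    have e2 : (k:ℤ) - ((0:ℕ):ℤ) = (k:ℤ) := by omega
    rw [e2, Int.emod_eq_of_lt (by omega) (by omega)]
    exact conv m hm _ _ (key2 (m:ℤ) (k:ℤ) hmZ (by omega) (by omega))
  · have e : ((k-1:ℕ):ℤ) - ((k'-1:ℕ):ℤ) = (k:ℤ) - (k':ℤ) := by omega
    rw [e, Int.emod_eq_of_lt (by omega) (by omega),
      Int.emod_eq_of_lt (by omega) (by omega)]
    exact conv m hm _ _ (key1 (m:ℤ) ((k:ℤ) - k') hmZ (by omega) (by omega))
lemma vtx_mem (n j : ℕ) (h : j < n) : vtx n j ∈ Pvert n := ⟨⟨j, h⟩, rfl⟩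

lemma Pvert_eq_vtx {n : ℕ} {x : AddCircle (2*π)} (hx : x ∈ Pvert n) :
    ∃ j : ℕ, j < n ∧ x = vtx n j := by
  obtain ⟨j, hj⟩ := hx
  exact ⟨j.val, j.isLt, hj.symm⟩

theorem stmt15 (m : ℕ) (hm : 2 ≤ m) :
    haveI : NeZero m := ⟨by omega⟩
    GromovHausdorff.ghDist (Pvert m) (Pvert (m + 1)) = π / (m + 1) := by
  haveI : NeZero m := ⟨by omega⟩
  have hπ := pi_pos
  have hm0 : 0 < m := by omega
  set X := ↥(Pvert m)
  set Y := ↥(Pvert (m+1))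
  -- upper bound
  set ε : ℝ := π / (m+1) with hεdef
  have hε : 0 < ε := by positivity
  let Φ : Fin (m+1) → X := fun p => ⟨vtx m (p.val - 1), vtx_mem m _ (by omega)⟩
  let Ψ : Fin (m+1) → Y := fun p => ⟨vtx (m+1) p.val, vtx_mem (m+1) _ p.isLt⟩
  have upper : GromovHausdorff.ghDist X Y ≤ ε := by
    have H : ∀ p q : Fin (m+1), |dist (Φ p) (Φ q) - dist (Ψ p) (Ψ q)| ≤ 2 * ε := by
      intro p q
      have h := main_ineq m hm p.val q.val (by omega) (by omega)
      exact h
    letI : MetricSpace (X ⊕ Y) := glueMetricApprox Φ Ψ ε hε H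
    have hisomL : Isometry (Sum.inl : X → X ⊕ Y) := Isometry.of_dist_eq fun x y => rfl
    have hisomR : Isometry (Sum.inr : Y → X ⊕ Y) := Isometry.of_dist_eq fun x y => rfl
    refine le_trans (GromovHausdorff.ghDist_le_hausdorffDist hisomL hisomR) ?_
    apply hausdorffDist_le_of_mem_dist hε.le
    · rintro _ ⟨x, rfl⟩
      obtain ⟨j, hj, hx⟩ := Pvert_eq_vtx x.2
      refine ⟨Sum.inr (Ψ ⟨j + 1, by omega⟩), mem_range_self _, ?_⟩
      have hx2 : x = Φ ⟨j + 1, by omega⟩ := by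
        apply Subtype.ext
        simpa [Φ] using hx
      rw [hx2]
      have hd : dist (Sum.inl (Φ ⟨j+1, by omega⟩) : X ⊕ Y) (Sum.inr (Ψ ⟨j+1, by omega⟩)) = ε :=
        glueDist_glued_points Φ Ψ ε _
      exact le_of_eq hd
    · rintro _ ⟨y, rfl⟩
      obtain ⟨k, hk, hy⟩ := Pvert_eq_vtx y.2
      refine ⟨Sum.inl (Φ ⟨k, by omega⟩), mem_range_self _, ?_⟩
      have hy2 : y = Ψ ⟨k, by omega⟩ := by
        apply Subtype.ext
        simpa [Ψ] using hy
      rw [hy2]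
      have hd : dist (Sum.inl (Φ ⟨k, by omega⟩) : X ⊕ Y) (Sum.inr (Ψ ⟨k, by omega⟩)) = ε :=
        glueDist_glued_points Φ Ψ ε _
      rw [dist_comm]
      exact le_of_eq hd
  -- lower bound
  have lower : ε ≤ GromovHausdorff.ghDist X Y := by
    rw [← GromovHausdorff.hausdorffDist_optimal (X := X) (Y := Y)]
    set f := GromovHausdorff.optimalGHInjl X Y with hf
    set g := GromovHausdorff.optimalGHInjr X Y with hg
    set D := hausdorffDist (range f) (range g) with hD
    have hfi := GromovHausdorff.isometry_optimalGHInjl X Y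
    have hgi := GromovHausdorff.isometry_optimalGHInjr X Y
    have hcf : IsCompact (range f) := isCompact_range hfi.continuous
    have hnef : (range f).Nonempty := range_nonempty _
    have hedist : EMetric.hausdorffEdist (range g) (range f) ≠ ⊤ :=
      hausdorffEdist_ne_top_of_nonempty_of_bounded (range_nonempty _) hnef
        (isCompact_range hgi.continuous).isBounded hcf.isBounded
    have hc : ∀ y : Y, ∃ x : X, dist (g y) (f x) ≤ D := by
      intro y
      obtain ⟨z, hzmem, hz⟩ := hcf.exists_infDist_eq_dist hnef (g y)
      obtain ⟨x, rfl⟩ := hzmem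
      refine ⟨x, ?_⟩
      rw [← hz]
      refine le_trans (infDist_le_hausdorffDist_of_mem (mem_range_self y) hedist) ?_
      rw [hausdorffDist_comm]
    choose c hcspec using hc
    let u : Fin (m+1) → Y := fun k => ⟨vtx (m+1) k.val, vtx_mem (m+1) _ k.isLt⟩
    letI : Fintype X := Fintype.ofFinite X
    have hsurj : Function.Surjective (fun j : Fin m => (⟨vtx m j.val, vtx_mem m _ j.isLt⟩ : X)) := by
      rintro x
      obtain ⟨j, hj, hx⟩ := Pvert_eq_vtx x.2
      exact ⟨⟨j, hj⟩, Subtype.ext hx.symm⟩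
    have hcard : Fintype.card X < Fintype.card (Fin (m+1)) := by
      have h1 : Fintype.card X ≤ Fintype.card (Fin m) := Fintype.card_le_of_surjective _ hsurj
      simp only [Fintype.card_fin] at h1 ⊢
      omega
    obtain ⟨k, k', hkk, he⟩ := Fintype.exists_ne_map_eq_of_card_lt (fun k => c (u k)) hcard
    have hvals : k.val ≠ k'.val := fun h => hkk (Fin.ext h)
    have hd2 : dist (u k) (u k') ≤ 2 * D := by
      have t1 := hcspec (u k)
      have t2 := hcspec (u k')
      rw [he] at t1
      calc dist (u k) (u k') = dist (g (u k)) (g (u k')) := (hgi.dist_eq _ _).symm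
        _ ≤ dist (g (u k)) (f (c (u k'))) + dist (f (c (u k'))) (g (u k')) := dist_triangle _ _ _
        _ ≤ D + D := add_le_add t1 (by rw [dist_comm]; exact t2)
        _ = 2 * D := by ring
    have hlow : 2 * ε ≤ dist (u k) (u k') := by
      have hdu : dist (u k) (u k') = dist (vtx (m+1) k.val) (vtx (m+1) k'.val) :=
        Subtype.dist_eq _ _
      rw [hdu, dist_vtx (m+1) _ _ (by omega)]
      set S : ℤ := ((k.val:ℤ) - (k'.val:ℤ)) % ((m+1:ℕ):ℤ) with hS
      have hS0 : 0 ≤ S := Int.emod_nonneg _ (by exact_mod_cast Nat.succ_ne_zero m)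
      have hSlt : S < ((m+1:ℕ):ℤ) := Int.emod_lt_of_pos _ (by exact_mod_cast Nat.succ_pos m)
      have hSne : S ≠ 0 := by
        intro h
        have hdvd : ((m+1:ℕ):ℤ) ∣ ((k.val:ℤ) - (k'.val:ℤ)) := Int.dvd_of_emod_eq_zero h
        have := Int.eq_zero_of_abs_lt_dvd hdvd (by
          rw [abs_lt]
          constructor <;> [skip; skip] <;>
          · push_cast
            omega)
        omega
      have hmin : (1:ℤ) ≤ min S (((m+1:ℕ):ℤ) - S) := le_min (by omega) (by omega)
      have hminR : (1:ℝ) ≤ ((min S (((m+1:ℕ):ℤ) - S) : ℤ) : ℝ) := by exact_mod_cast hmin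
      have hpos : (0:ℝ) < 2 * π / ((m+1:ℕ):ℝ) := by positivity
      calc 2 * ε = 2 * π / ((m+1:ℕ):ℝ) * 1 := by
            rw [hεdef]; push_cast; field_simp
        _ ≤ 2 * π / ((m+1:ℕ):ℝ) * ((min S (((m+1:ℕ):ℤ) - S) : ℤ) : ℝ) :=
            mul_le_mul_of_nonneg_left hminR hpos.le
    linarith
  exact le_antisymm upper lower
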